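/- Let (g0, g1, δ, [·,·]) be a strict Lie 2-algebra with a bilinear form ω : g0 × g1 → K whose induced maps g0 → g1* and g1 → g0* are bijective, satisfying ω([x,y], a) + ω(y, [x,a]) − ω(x, [y,a]) = 0 and ω(δa, b) + ω(δb, a) = 0 for all x,y ∈ g0, a,b ∈ g1. Suppose g0 = g0⁺ ⊕ g0⁻ and g1 = g1⁺ ⊕ g1⁻, where g⁺ = g0⁺ ⊕ g1⁺ and g⁻ = g0⁻ ⊕ g1⁻ are closed under δ and under the brackets and are Lagrangian: g⁺^⊥ = g⁺ and g⁻^⊥ = g⁻, where for a graded subspace U = U0 ⊕ U1 one sets U^⊥ = {x + a ∈ g0 ⊕ g1 : ω(x, b) = 0 for all b ∈ U1 and ω(y, a) = 0 for all y ∈ U0}. Suppose bilinear maps ∗ : g0 × g0 → g0, g0 × g1 → g1, g1 × g0 → g1 satisfy ω(x∗y, a) = −ω(y, [x,a]), ω(z, x∗b) = −ω([x,z], b), ω(z, a∗y) = −ω(y, [z,a]) for all x,y,z ∈ g0, a,b ∈ g1 (such maps exist uniquely by nondegeneracy). Then: (i) (g0, g1, δ, ∗) is a strict pre-Lie 2-algebra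 whose subadjacent brackets recover [·,·], i.e. x∗y − y∗x = [x,y] and x∗a − a∗x = [x,a]; (ii) ω is a nondegenerate invariant degree-1 bilinear form on (g0, g1, δ, ∗); (iii) g⁺ and g⁻ are closed under ∗ and isotropic, so ((g, ∗, ω), g⁺, g⁻) is a Manin triple of strict pre-Lie 2-algebras. -/
import Mathlib


namespace PreLie2

open Module TensorProduct

variable (K : Type*) [Field K]

/-- A two-argument map between modules is bilinear. -/
def IsBilin {M N P : Type*} [AddCommGroup M] [Module K M] [AddCommGroup N] [Module K N]
    [AddCommGroup P] [Module K P] (f : M → N → P) : Prop :=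
  (∀ m, IsLinearMap K (f m)) ∧ ∀ n, IsLinearMap K fun m => f m n

section TwoTerm

variable {A0 A1 : Type*} [AddCommGroup A0] [Module K A0] [AddCommGroup A1] [Module K A1]

/-- A strict pre-Lie `2`-algebra structure on the two-term complex `d : A1 → A0`. -/
structure IsStrictPreLie2 (d : A1 → A0) (m00 : A0 → A0 → A0)
    (m01 : A0 → A1 → A1) (m10 : A1 → A0 → A1) : Prop where
  d_lin : IsLinearMap K d
  m00_bilin : IsBilin K m00
  m01_bilin : IsBilin K m01
  m10_bilin : IsBilin K m10
  d_m01 : ∀ x a, d (m01 x a) = m00 x (d a)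
  d_m10 : ∀ a x, d (m10 a x) = m00 (d a) x
  d_mix : ∀ a b, m01 (d a) b = m10 a (d b)
  preLie0 : ∀ x y z, m00 x (m00 y z) - m00 (m00 x y) z = m00 y (m00 x z) - m00 (m00 y x) z
  preLie1 : ∀ x y a, m01 x (m01 y a) - m01 (m00 x y) a = m01 y (m01 x a) - m01 (m00 y x) a
  preLie2 : ∀ a x y, m10 a (m00 x y) - m10 (m10 a x) y = m01 x (m10 a y) - m10 (m01 x a) y

/-- A strict Lie `2`-algebra structure on the two-term complex `δ : A1 → A0`. -/
structure IsStrictLie2 (δ : A1 → A0) (br0 : A0 → A0 → A0) (br1 : A0 → A1 → A1) : Prop where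
  δ_lin : IsLinearMap K δ
  br0_bilin : IsBilin K br0
  br1_bilin : IsBilin K br1
  skew : ∀ x y, br0 x y = -br0 y x
  δ_br1 : ∀ x a, δ (br1 x a) = br0 x (δ a)
  br1_δ : ∀ a b, br1 (δ a) b = -br1 (δ b) a
  jacobi0 : ∀ x y z, br0 (br0 x y) z + br0 (br0 y z) x + br0 (br0 z x) y = 0
  jacobi1 : ∀ x y b, br1 x (br1 y b) - br1 y (br1 x b) - br1 (br0 x y) b = 0

/-- A strict associative `2`-algebra structure on the two-term complex `d : A1 → A0`. -/
structure IsStrictAssoc2 (d : A1 → A0) (m00 : A0 → A0 → A0)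
    (m01 : A0 → A1 → A1) (m10 : A1 → A0 → A1) : Prop where
  d_lin : IsLinearMap K d
  m00_bilin : IsBilin K m00
  m01_bilin : IsBilin K m01
  m10_bilin : IsBilin K m10
  d_m01 : ∀ x a, d (m01 x a) = m00 x (d a)
  d_m10 : ∀ a x, d (m10 a x) = m00 (d a) x
  d_mix : ∀ a b, m01 (d a) b = m10 a (d b)
  assoc000 : ∀ x y z, m00 x (m00 y z) = m00 (m00 x y) z
  assoc001 : ∀ x y a, m01 x (m01 y a) = m01 (m00 x y) a
  assoc010 : ∀ x a y, m01 x (m10 a y) = m10 (m01 x a) y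
  assoc100 : ∀ a x y, m10 a (m00 x y) = m10 (m10 a x) y

end TwoTerm

/-- A pre-Lie algebra structure. -/
structure IsPreLie {B : Type*} [AddCommGroup B] [Module K B] (mul : B → B → B) : Prop where
  bilin : IsBilin K mul
  preLie : ∀ x y z, mul (mul x y) z - mul x (mul y z) = mul (mul y x) z - mul y (mul x z)

section Rep

variable {g0 g1 V0 V1 : Type*}
  [AddCommGroup g0] [Module K g0] [AddCommGroup g1] [Module K g1]
  [AddCommGroup V0] [Module K V0] [AddCommGroup V1] [Module K V1]

/-- A strict representation of a strict Lie 2-algebra `(g0, g1, δ, br0, br1)` on the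
two-term complex `par : V1 → V0`. -/
structure IsStrictRepLie2 (δ : g1 → g0) (br0 : g0 → g0 → g0) (br1 : g0 → g1 → g1)
    (par : V1 → V0) (ρ00 : g0 → V0 → V0) (ρ01 : g0 → V1 → V1) (ρ1 : g1 → V0 → V1) : Prop where
  ρ00_bilin : IsBilin K ρ00
  ρ01_bilin : IsBilin K ρ01
  ρ1_bilin : IsBilin K ρ1
  chain : ∀ x m, ρ00 x (par m) = par (ρ01 x m)
  comp0 : ∀ a v, ρ00 (δ a) v = par (ρ1 a v)
  comp1 : ∀ a m, ρ01 (δ a) m = ρ1 a (par m)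
  rep00 : ∀ x y v, ρ00 (br0 x y) v = ρ00 x (ρ00 y v) - ρ00 y (ρ00 x v)
  rep01 : ∀ x y m, ρ01 (br0 x y) m = ρ01 x (ρ01 y m) - ρ01 y (ρ01 x m)
  rep1 : ∀ x a v, ρ1 (br1 x a) v = ρ01 x (ρ1 a v) - ρ1 a (ρ00 x v)

/-- A strict representation of a strict pre-Lie 2-algebra `(g0, g1, d, m00, m01, m10)` on the
two-term complex `par : V1 → V0`. -/
structure IsStrictRepPreLie2 (d : g1 → g0) (m00 : g0 → g0 → g0) (m01 : g0 → g1 → g1)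
    (m10 : g1 → g0 → g1) (par : V1 → V0)
    (ρ00 : g0 → V0 → V0) (ρ01 : g0 → V1 → V1) (ρ1 : g1 → V0 → V1)
    (μ00 : g0 → V0 → V0) (μ01 : g0 → V1 → V1) (μ1 : g1 → V0 → V1) : Prop where
  toRepLie : IsStrictRepLie2 K d (fun x y => m00 x y - m00 y x)
    (fun x a => m01 x a - m10 a x) par ρ00 ρ01 ρ1
  μ00_bilin : IsBilin K μ00
  μ01_bilin : IsBilin K μ01
  μ1_bilin : IsBilin K μ1
  μchain : ∀ x m, μ00 x (par m) = par (μ01 x m)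
  μcomp0 : ∀ a v, μ00 (d a) v = par (μ1 a v)
  μcomp1 : ∀ a m, μ01 (d a) m = μ1 a (par m)
  eqA0 : ∀ x y v, μ00 (m00 x y) v + μ00 y (ρ00 x v) - ρ00 x (μ00 y v) - μ00 y (μ00 x v) = 0
  eqA1 : ∀ x y m, μ01 (m00 x y) m + μ01 y (ρ01 x m) - ρ01 x (μ01 y m) - μ01 y (μ01 x m) = 0
  eqB : ∀ x a v, μ1 (m01 x a) v - ρ01 x (μ1 a v) + μ1 a (ρ00 x v) - μ1 a (μ00 x v) = 0
  eqC : ∀ a x v, μ1 (m10 a x) v - ρ1 a (μ00 x v) + μ01 x (ρ1 a v) - μ01 x (μ1 a v) = 0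

/-- An `O`-operator on a strict Lie 2-algebra associated to a strict representation. -/
structure IsOOperator (δ : g1 → g0) (br0 : g0 → g0 → g0) (br1 : g0 → g1 → g1)
    (par : V1 → V0) (ρ00 : g0 → V0 → V0) (ρ01 : g0 → V1 → V1) (ρ1 : g1 → V0 → V1)
    (T0 : V0 → g0) (T1 : V1 → g1) : Prop where
  T0_lin : IsLinearMap K T0
  T1_lin : IsLinearMap K T1
  chain : ∀ m, T0 (par m) = δ (T1 m)
  eq0 : ∀ u v, T0 (ρ00 (T0 u) v - ρ00 (T0 v) u) = br0 (T0 u) (T0 v)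
  eq1 : ∀ m v, T1 (ρ1 (T1 m) v - ρ01 (T0 v) m) = -br1 (T0 v) (T1 m)

end Rep

section Matched

variable {g0 g1 h0 h1 : Type*}
  [AddCommGroup g0] [Module K g0] [AddCommGroup g1] [Module K g1]
  [AddCommGroup h0] [Module K h0] [AddCommGroup h1] [Module K h1]

/-- A matched pair of strict Lie 2-algebras. -/
structure IsMatchedPairLie2
    (δ : g1 → g0) (br0 : g0 → g0 → g0) (br1 : g0 → g1 → g1)
    (δ' : h1 → h0) (br0' : h0 → h0 → h0) (br1' : h0 → h1 → h1)
    (ν00 : g0 → h0 → h0) (ν01 : g0 → h1 → h1) (ν1 : g1 → h0 → h1)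
    (ν00' : h0 → g0 → g0) (ν01' : h0 → g1 → g1) (ν1' : h1 → g0 → g1) : Prop where
  lie : IsStrictLie2 K δ br0 br1
  lie' : IsStrictLie2 K δ' br0' br1'
  rep : IsStrictRepLie2 K δ br0 br1 δ' ν00 ν01 ν1
  rep' : IsStrictRepLie2 K δ' br0' br1' δ ν00' ν01' ν1'
  eqL1 : ∀ x' x y, ν00' x' (br0 x y) =
      br0 x (ν00' x' y) + br0 (ν00' x' x) y + ν00' (ν00 y x') x - ν00' (ν00 x x') y
  eqL2 : ∀ x x' y', ν00 x (br0' x' y') =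
      br0' x' (ν00 x y') + br0' (ν00 x x') y' + ν00 (ν00' y' x) x' - ν00 (ν00' x' x) y'
  eqL3 : ∀ h' x y, ν1' h' (br0 x y) =
      br1 x (ν1' h' y) - br1 y (ν1' h' x) + ν1' (ν01 y h') x - ν1' (ν01 x h') y
  eqL4 : ∀ h x' y', ν1 h (br0' x' y') =
      br1' x' (ν1 h y') - br1' y' (ν1 h x') + ν1 (ν01' y' h) x' - ν1 (ν01' x' h) y'
  eqL5 : ∀ x' x h, ν01' x' (br1 x h) =
      br1 x (ν01' x' h) + br1 (ν00' x' x) h + ν1' (ν1 h x') x - ν01' (ν00 x x') h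
  eqL6 : ∀ x x' h', ν01 x (br1' x' h') =
      br1' x' (ν01 x h') + br1' (ν00 x x') h' + ν1 (ν1' h' x) x' - ν01 (ν00' x' x) h'

/-- A matched pair of strict pre-Lie 2-algebras. -/
structure IsMatchedPairPreLie2
    (d : g1 → g0) (m00 : g0 → g0 → g0) (m01 : g0 → g1 → g1) (m10 : g1 → g0 → g1)
    (d' : h1 → h0) (n00 : h0 → h0 → h0) (n01 : h0 → h1 → h1) (n10 : h1 → h0 → h1)
    (ρ00 : g0 → h0 → h0) (ρ01 : g0 → h1 → h1) (ρ1 : g1 → h0 → h1)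
    (μ00 : g0 → h0 → h0) (μ01 : g0 → h1 → h1) (μ1 : g1 → h0 → h1)
    (ρ00' : h0 → g0 → g0) (ρ01' : h0 → g1 → g1) (ρ1' : h1 → g0 → g1)
    (μ00' : h0 → g0 → g0) (μ01' : h0 → g1 → g1) (μ1' : h1 → g0 → g1) : Prop where
  alg : IsStrictPreLie2 K d m00 m01 m10
  alg' : IsStrictPreLie2 K d' n00 n01 n10
  rep : IsStrictRepPreLie2 K d m00 m01 m10 d' ρ00 ρ01 ρ1 μ00 μ01 μ1
  rep' : IsStrictRepPreLie2 K d' n00 n01 n10 d ρ00' ρ01' ρ1' μ00' μ01' μ1'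
  eqM1 : ∀ a' x y, μ1' a' (m00 x y - m00 y x) =
      m01 x (μ1' a' y) - m01 y (μ1' a' x) + μ1' (ρ01 y a') x - μ1' (ρ01 x a') y
  eqM2 : ∀ a x' y', μ1 a (n00 x' y' - n00 y' x') =
      n01 x' (μ1 a y') - n01 y' (μ1 a x') + μ1 (ρ01' y' a) x' - μ1 (ρ01' x' a) y'
  eqM3 : ∀ z' x y, μ00' z' (m00 x y - m00 y x) =
      m00 x (μ00' z' y) - m00 y (μ00' z' x) + μ00' (ρ00 y z') x - μ00' (ρ00 x z') y
  eqM4 : ∀ z x' y', μ00 z (n00 x' y' - n00 y' x') =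
      n00 x' (μ00 z y') - n00 y' (μ00 z x') + μ00 (ρ00' y' z) x' - μ00 (ρ00' x' z) y'
  eqM5 : ∀ y' x a, μ01' y' (m01 x a - m10 a x) =
      m01 x (μ01' y' a) - m10 a (μ00' y' x) + μ1' (ρ1 a y') x - μ01' (ρ00 x y') a
  eqM6 : ∀ y x' a', μ01 y (n01 x' a' - n10 a' x') =
      n01 x' (μ01 y a') - n10 a' (μ00 y x') + μ1 (ρ1' a' y) x' - μ01 (ρ00' x' y) a'
  eqM7 : ∀ x y' a', ρ01 x (n01 y' a') =
      n01 (ρ00 x y' - μ00 x y') a' + ρ01 (μ00' y' x - ρ00' y' x) a'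
        + n01 y' (ρ01 x a') + μ1 (μ1' a' x) y'
  eqM8 : ∀ x' y a, ρ01' x' (m01 y a) =
      m01 (ρ00' x' y - μ00' x' y) a + ρ01' (μ00 y x' - ρ00 y x') a
        + m01 y (ρ01' x' a) + μ1' (μ1 a x') y
  eqM9 : ∀ x a' y', ρ01 x (n10 a' y') =
      n10 (ρ01 x a' - μ01 x a') y' + ρ1 (μ1' a' x - ρ1' a' x) y'
        + n10 a' (ρ00 x y') + μ01 (μ00' y' x) a'
  eqM10 : ∀ x' a y, ρ01' x' (m10 a y) =
      m10 (ρ01' x' a - μ01' x' a) y + ρ1' (μ1 a x' - ρ1 a x') y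
        + m10 a (ρ00' x' y) + μ01' (μ00 y x') a
  eqM11 : ∀ a x' y', ρ1 a (n00 x' y') =
      n10 (ρ1 a x' - μ1 a x') y' + ρ1 (μ01' x' a - ρ01' x' a) y'
        + n01 x' (ρ1 a y') + μ1 (μ01' y' a) x'
  eqM12 : ∀ a' x y, ρ1' a' (m00 x y) =
      m10 (ρ1' a' x - μ1' a' x) y + ρ1' (μ01 x a' - ρ01 x a') y
        + m01 x (ρ1' a' y) + μ1' (μ01 y a') x
  eqM13 : ∀ x y' z', ρ00 x (n00 y' z') =
      n00 (ρ00 x y' - μ00 x y') z' + ρ00 (μ00' y' x - ρ00' y' x) z'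
        + n00 y' (ρ00 x z') + μ00 (μ00' z' x) y'
  eqM14 : ∀ x' y z, ρ00' x' (m00 y z) =
      m00 (ρ00' x' y - μ00' x' y) z + ρ00' (μ00 y x' - ρ00 y x') z
        + m00 y (ρ00' x' z) + μ00' (μ00 z x') y

end Matched

end PreLie2

open PreLie2 Module

/-- a special para-Kähler strict Lie 2-algebra gives a Manin triple of strict
pre-Lie 2-algebras. -/
theorem special_paraKahler_gives_manin_triple
    {K : Type*} [Field K] [CharZero K]
    {g0 g1 : Type*} [AddCommGroup g0] [Module K g0] [FiniteDimensional K g0]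
    [AddCommGroup g1] [Module K g1] [FiniteDimensional K g1]
    (δ : g1 →ₗ[K] g0) (br0 : g0 →ₗ[K] g0 →ₗ[K] g0) (br1 : g0 →ₗ[K] g1 →ₗ[K] g1)
    (hg : IsStrictLie2 K (⇑δ) (fun x y => br0 x y) (fun x a => br1 x a))
    (ω : g0 →ₗ[K] g1 →ₗ[K] K)
    (hnd0 : Function.Bijective fun x => ω x)
    (hnd1 : Function.Bijective fun a => ω.flip a)
    (hcl1 : ∀ x y a, ω (br0 x y) a + ω y (br1 x a) - ω x (br1 y a) = 0)
    (hcl2 : ∀ a b, ω (δ a) b + ω (δ b) a = 0)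
    -- the two Lagrangian strict sub-Lie 2-algebras `g⁺ = P0 ⊕ P1` and `g⁻ = N0 ⊕ N1`
    (P0 N0 : Submodule K g0) (P1 N1 : Submodule K g1)
    (hcompl0 : IsCompl P0 N0) (hcompl1 : IsCompl P1 N1)
    (hδP : ∀ a ∈ P1, δ a ∈ P0) (hδN : ∀ a ∈ N1, δ a ∈ N0)
    (hbrP0 : ∀ x ∈ P0, ∀ y ∈ P0, br0 x y ∈ P0)
    (hbrP1 : ∀ x ∈ P0, ∀ a ∈ P1, br1 x a ∈ P1)
    (hbrN0 : ∀ x ∈ N0, ∀ y ∈ N0, br0 x y ∈ N0)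
    (hbrN1 : ∀ x ∈ N0, ∀ a ∈ N1, br1 x a ∈ N1)
    (hLagP : ∀ x a, ((∀ b ∈ P1, ω x b = 0) ∧ ∀ y ∈ P0, ω y a = 0) ↔ (x ∈ P0 ∧ a ∈ P1))
    (hLagN : ∀ x a, ((∀ b ∈ N1, ω x b = 0) ∧ ∀ y ∈ N0, ω y a = 0) ↔ (x ∈ N0 ∧ a ∈ N1))
    -- the multiplications `∗` defined through `ω`
    (s00 : g0 →ₗ[K] g0 →ₗ[K] g0) (s01 : g0 →ₗ[K] g1 →ₗ[K] g1) (s10 : g1 →ₗ[K] g0 →ₗ[K] g1)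
    (hs00 : ∀ x y a, ω (s00 x y) a = -ω y (br1 x a))
    (hs01 : ∀ x z b, ω z (s01 x b) = -ω (br0 x z) b)
    (hs10 : ∀ a z y, ω z (s10 a y) = -ω y (br1 z a)) :
    -- (i) `(g0, g1, δ, ∗)` is a strict pre-Lie 2-algebra subadjacent to `(g0, g1, δ, [·,·])`
    (IsStrictPreLie2 K (⇑δ) (fun x y => s00 x y) (fun x a => s01 x a) (fun a x => s10 a x)
      ∧ (∀ x y, s00 x y - s00 y x = br0 x y)
      ∧ (∀ x a, s01 x a - s10 a x = br1 x a))
    -- (ii) `ω` is a nondegenerate invariant degree-1 bilinear form on `(g0, g1, δ, ∗)`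
    ∧ ((∀ a b, ω (δ a) b = -ω (δ b) a)
      ∧ (∀ x y a, ω (s00 x y) a = -ω y (s01 x a - s10 a x))
      ∧ (∀ x z b, ω z (s01 x b) = -ω (s00 x z - s00 z x) b)
      ∧ (∀ z a y, ω z (s10 a y) = -ω y (s01 z a - s10 a z)))
    -- (iii) `g⁺` and `g⁻` are isotropic strict sub-pre-Lie 2-algebras
    ∧ ((∀ x ∈ P0, ∀ y ∈ P0, s00 x y ∈ P0)
      ∧ (∀ x ∈ P0, ∀ a ∈ P1, s01 x a ∈ P1)
      ∧ (∀ a ∈ P1, ∀ x ∈ P0, s10 a x ∈ P1)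
      ∧ (∀ x ∈ N0, ∀ y ∈ N0, s00 x y ∈ N0)
      ∧ (∀ x ∈ N0, ∀ a ∈ N1, s01 x a ∈ N1)
      ∧ (∀ a ∈ N1, ∀ x ∈ N0, s10 a x ∈ N1)
      ∧ (∀ x ∈ P0, ∀ a ∈ P1, ω x a = 0)
      ∧ (∀ x ∈ N0, ∀ a ∈ N1, ω x a = 0)) := by
    -- injectivity from nondegeneracy
  have inj0 : ∀ u v : g0, (∀ a, ω u a = ω v a) → u = v := fun u v h =>
    hnd0.injective (LinearMap.ext h)
  have inj1 : ∀ c e : g1, (∀ z, ω z c = ω z e) → c = e := fun c e h =>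
    hnd1.injective (LinearMap.ext h)
  have hωsk : ∀ u v a, ω (br0 u v) a = -ω (br0 v u) a := by
    intro u v a
    rw [show br0 u v = -(br0 v u) from hg.skew u v]
    simp
  -- subadjacent brackets
  have sub0 : ∀ x y, s00 x y - s00 y x = br0 x y := by
    intro x y
    apply inj0; intro a
    simp only [map_sub, LinearMap.sub_apply]
    linear_combination hs00 x y a - hs00 y x a - hcl1 x y a
  have sub1 : ∀ x a, s01 x a - s10 a x = br1 x a := by
    intro x a
    apply inj1; intro z
    simp only [map_sub]
    linear_combination hs01 x z a - hs10 a z x + hcl1 z x a - hωsk x z a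
  -- d-compatibilities
  have d01 : ∀ x c, δ (s01 x c) = s00 x (δ c) := by
    intro x c
    apply inj0; intro b
    have h4 := hcl2 c (br1 x b)
    rw [hg.δ_br1 x b] at h4
    linear_combination hcl2 (s01 x c) b - hs01 x (δ b) c - hs00 x (δ c) b + h4
  have d10 : ∀ c x, δ (s10 c x) = s00 (δ c) x := by
    intro c x
    apply inj0; intro b
    have h4 : ω x (br1 (δ c) b) = -ω x (br1 (δ b) c) := by
      rw [show br1 (δ c) b = -(br1 (δ b) c) from hg.br1_δ c b]
      simp
    linear_combination hcl2 (s10 c x) b - hs10 c (δ b) x - hs00 (δ c) x b + h4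
  have dmix : ∀ c b, s01 (δ c) b = s10 c (δ b) := by
    intro c b
    apply inj1; intro z
    have h3 := hcl2 (br1 z c) b
    rw [hg.δ_br1 z c] at h3
    linear_combination hs01 (δ c) z b - hs10 c z (δ b) + h3 - hωsk (δ c) z b
  -- pre-Lie identities
  have pre0 : ∀ x y z, s00 x (s00 y z) - s00 (s00 x y) z
      = s00 y (s00 x z) - s00 (s00 y x) z := by
    intro x y z
    apply inj0; intro a
    simp only [map_sub, LinearMap.sub_apply]
    have key : br1 (s00 x y) a - br1 (s00 y x) a
        = br1 x (br1 y a) - br1 y (br1 x a) := by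
      have hb : br1 (s00 x y) a - br1 (s00 y x) a = br1 (br0 x y) a := by
        rw [← sub0 x y]; simp [map_sub]
      rw [hb]
      exact (sub_eq_zero.mp (hg.jacobi1 x y a)).symm
    have j := congrArg (ω z) key
    simp only [map_sub] at j
    linear_combination hs00 x (s00 y z) a - hs00 (s00 x y) z a - hs00 y (s00 x z) a +
      hs00 (s00 y x) z a - hs00 y z (br1 x a) + hs00 x z (br1 y a) + j
  have pre1 : ∀ x y a, s01 x (s01 y a) - s01 (s00 x y) a
      = s01 y (s01 x a) - s01 (s00 y x) a := by
    intro x y a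
    apply inj1; intro z
    simp only [map_sub]
    have J : ω (br0 (br0 x y) z) a + ω (br0 (br0 y z) x) a + ω (br0 (br0 z x) y) a = 0 := by
      have h := congrArg (fun w => ω w a) (hg.jacobi0 x y z)
      simpa using h
    have k3 : ω (br0 y (br0 z x)) a = -ω (br0 y (br0 x z)) a := by
      rw [show br0 z x = -(br0 x z) from hg.skew z x]
      simp
    have hB : ω z (s01 (s00 x y) a) - ω z (s01 (s00 y x) a)
        = -ω (br0 (br0 x y) z) a := by
      have e : s01 (s00 x y) a - s01 (s00 y x) a = s01 (br0 x y) a := by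
        rw [← sub0 x y]; simp [map_sub]
      have e2 := congrArg (ω z) e
      simp only [map_sub] at e2
      rw [e2, hs01 (br0 x y) z a]
    linear_combination hs01 x z (s01 y a) - hs01 y (br0 x z) a - hs01 y z (s01 x a) +
      hs01 x (br0 y z) a - hB + J - hωsk (br0 y z) x a - hωsk (br0 z x) y a + k3
  have pre2 : ∀ a x y, s10 a (s00 x y) - s10 (s10 a x) y
      = s01 x (s10 a y) - s10 (s01 x a) y := by
    intro a x y
    apply inj1; intro z
    simp only [map_sub]
    have c5 : ω z (s10 (s01 x a) y) - ω z (s10 (s10 a x) y)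
        = -ω y (br1 z (br1 x a)) := by
      have e : s10 (s01 x a) y - s10 (s10 a x) y = s10 (br1 x a) y := by
        rw [← sub1 x a]; simp [map_sub]
      have e2 := congrArg (ω z) e
      simp only [map_sub] at e2
      rw [e2, hs10 (br1 x a) z y]
    have J : ω y (br1 x (br1 z a)) - ω y (br1 z (br1 x a)) - ω y (br1 (br0 x z) a) = 0 := by
      have h := congrArg (ω y) (hg.jacobi1 x z a)
      simpa using h
    linear_combination hs10 a z (s00 x y) - hs00 x y (br1 z a) - hs01 x z (s10 a y) +
      hs10 a (br0 x z) y + c5 + J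
  -- isotropy
  have isoP : ∀ x ∈ P0, ∀ a ∈ P1, ω x a = 0 := fun x hx a ha =>
    ((hLagP x a).mpr ⟨hx, ha⟩).1 a ha
  have isoN : ∀ x ∈ N0, ∀ a ∈ N1, ω x a = 0 := fun x hx a ha =>
    ((hLagN x a).mpr ⟨hx, ha⟩).1 a ha
  -- closure
  have cP00 : ∀ x ∈ P0, ∀ y ∈ P0, s00 x y ∈ P0 := by
    intro x hx y hy
    refine ((hLagP (s00 x y) 0).mp ⟨fun b hb => ?_, fun z _ => by simp⟩).1
    rw [hs00 x y b, isoP y hy _ (hbrP1 x hx b hb), neg_zero]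
  have cP01 : ∀ x ∈ P0, ∀ a ∈ P1, s01 x a ∈ P1 := by
    intro x hx a ha
    refine ((hLagP 0 (s01 x a)).mp ⟨fun b _ => by simp, fun z hz => ?_⟩).2
    rw [hs01 x z a, isoP _ (hbrP0 x hx z hz) a ha, neg_zero]
  have cP10 : ∀ a ∈ P1, ∀ x ∈ P0, s10 a x ∈ P1 := by
    intro a ha x hx
    refine ((hLagP 0 (s10 a x)).mp ⟨fun b _ => by simp, fun z hz => ?_⟩).2
    rw [hs10 a z x, isoP x hx _ (hbrP1 z hz a ha), neg_zero]
  have cN00 : ∀ x ∈ N0, ∀ y ∈ N0, s00 x y ∈ N0 := by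
    intro x hx y hy
    refine ((hLagN (s00 x y) 0).mp ⟨fun b hb => ?_, fun z _ => by simp⟩).1
    rw [hs00 x y b, isoN y hy _ (hbrN1 x hx b hb), neg_zero]
  have cN01 : ∀ x ∈ N0, ∀ a ∈ N1, s01 x a ∈ N1 := by
    intro x hx a ha
    refine ((hLagN 0 (s01 x a)).mp ⟨fun b _ => by simp, fun z hz => ?_⟩).2
    rw [hs01 x z a, isoN _ (hbrN0 x hx z hz) a ha, neg_zero]
  have cN10 : ∀ a ∈ N1, ∀ x ∈ N0, s10 a x ∈ N1 := by
    intro a ha x hx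
    refine ((hLagN 0 (s10 a x)).mp ⟨fun b _ => by simp, fun z hz => ?_⟩).2
    rw [hs10 a z x, isoN x hx _ (hbrN1 z hz a ha), neg_zero]
  refine ⟨⟨?_, sub0, sub1⟩,
    ⟨fun a b => by linear_combination hcl2 a b,
     fun x y a => by rw [sub1]; exact hs00 x y a,
     fun x z b => by rw [sub0]; exact hs01 x z b,
     fun z a y => by rw [sub1]; exact hs10 a z y⟩,
    cP00, cP01, cP10, cN00, cN01, cN10, isoP, isoN⟩
  exact
    { d_lin := δ.isLinear
      m00_bilin := ⟨fun m => (s00 m).isLinear, fun n => ⟨fun p q => by simp, fun c p => by simp⟩⟩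
      m01_bilin := ⟨fun m => (s01 m).isLinear, fun n => ⟨fun p q => by simp, fun c p => by simp⟩⟩
      m10_bilin := ⟨fun m => (s10 m).isLinear, fun n => ⟨fun p q => by simp, fun c p => by simp⟩⟩
      d_m01 := d01
      d_m10 := d10
      d_mix := dmix
      preLie0 := pre0
      preLie1 := pre1
      preLie2 := pre2 }
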